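/- arXiv:1806.04917 — 4 statements merged into one kernel-verified Lean document; each statement's English description precedes it below -/
import Mathlib

section
/- For all positive integers n and c, there exists a least integer k with the following property: for any pairwise disjoint nonempty finite sets A₀, ..., A_{k-1} ⊆ ℕ and any c-coloring of NU{A₀,...,A_{k-1}}, there exist pairwise disjoint sets d₀, ..., d_{n-1}, each in NU{A₀,...,A_{k-1}}, such that NU{d₀,...,d_{n-1}} is monochromatic. (This least k is denoted U(n,c).) -/
open Finset

namespace FolkmanAux

/-- Binary support of a natural number, as a `Finset`. -/
def bset (m : ℕ) : Finset ℕ := m.bitIndices.toFinset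

lemma toNat_bset (m : ℕ) : ∑ i ∈ bset m, 2^i = m :=
  Finset.twoPowSum_toFinset_bitIndices m

lemma bset_toNat (S : Finset ℕ) : bset (∑ i ∈ S, 2^i) = S :=
  Finset.toFinset_bitIndices_twoPowSum S

lemma bset_zero : bset 0 = ∅ := by simp [bset]

lemma bset_nonempty {m : ℕ} (hm : 0 < m) : (bset m).Nonempty := by
  rcases (bset m).eq_empty_or_nonempty with h | h
  · have := toNat_bset m
    rw [h] at this
    simp at this
    omega
  · exact h

lemma lt_of_mem_bset {m t i : ℕ} (hm : m < 2^t) (hi : i ∈ bset m) : i < t := by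
  have h2 : 2^i ≤ m := Nat.two_pow_le_of_mem_bitIndices (List.mem_toFinset.1 hi)
  have := lt_of_le_of_lt h2 hm
  exact (Nat.pow_lt_pow_iff_right (by norm_num)).1 this

lemma le_of_mem_bset_dvd {t b i : ℕ} (hb : 2^t ∣ b) (hi : i ∈ bset b) : t ≤ i := by
  obtain ⟨q, rfl⟩ := hb
  simp only [bset, Nat.bitIndices_two_pow_mul, List.mem_toFinset] at hi
  rw [List.mem_map] at hi
  obtain ⟨x, -, rfl⟩ := hi
  omega

lemma bset_add {t a b : ℕ} (ha : a < 2^t) (hb : 2^t ∣ b) :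
    bset (a + b) = bset a ∪ bset b ∧ Disjoint (bset a) (bset b) := by
  have hdisj : Disjoint (bset a) (bset b) := by
    rw [Finset.disjoint_left]
    intro i hia hib
    exact absurd (le_of_mem_bset_dvd hb hib) (not_le.2 (lt_of_mem_bset ha hia))
  refine ⟨?_, hdisj⟩
  have : a + b = ∑ i ∈ bset a ∪ bset b, 2^i := by
    rw [Finset.sum_union hdisj, toNat_bset, toNat_bset]
  rw [this, bset_toNat]

/-- Pigeonhole: some block of consecutive values of `f`, starting past `e`,
has sum divisible by `2^t`. -/
lemma exists_block (f : ℕ → ℕ) (e t : ℕ) :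
    ∃ p : ℕ × ℕ, e ≤ p.1 ∧ p.1 < p.2 ∧ 2^t ∣ ∑ i ∈ Finset.Ico p.1 p.2, f i := by
  have hpos : 0 < 2^t := Nat.pow_pos (by norm_num)
  have hcard : (Finset.range (2^t)).card < (Finset.Icc e (e + 2^t)).card := by
    rw [Nat.card_Icc, Finset.card_range]; omega
  have hmaps : ∀ x ∈ Finset.Icc e (e + 2^t),
      (∑ i ∈ Finset.Ico e x, f i) % 2^t ∈ Finset.range (2^t) :=
    fun x _ => Finset.mem_range.2 (Nat.mod_lt _ hpos)
  obtain ⟨x, hx, y, hy, hxy, hfxy⟩ :=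
    Finset.exists_ne_map_eq_of_card_lt_of_maps_to hcard hmaps
  rcases hxy.lt_or_gt with h | h
  · refine ⟨(x, y), (Finset.mem_Icc.1 hx).1, h, ?_⟩
    have hsum := Finset.sum_Ico_consecutive f (Finset.mem_Icc.1 hx).1 h.le
    have : (∑ i ∈ Finset.Ico e x, f i) ≡ (∑ i ∈ Finset.Ico e y, f i) [MOD 2^t] := hfxy
    rw [← hsum] at this
    have h0 : (∑ i ∈ Finset.Ico x y, f i) ≡ 0 [MOD 2^t] := by
      have h1 : (∑ i ∈ Finset.Ico e x, f i) + (∑ i ∈ Finset.Ico x y, f i)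
          ≡ (∑ i ∈ Finset.Ico e x, f i) + 0 [MOD 2^t] := by simpa using this.symm
      exact Nat.ModEq.add_left_cancel' _ h1
    exact (Nat.modEq_zero_iff_dvd).1 h0
  · refine ⟨(y, x), (Finset.mem_Icc.1 hy).1, h, ?_⟩
    have hsum := Finset.sum_Ico_consecutive f (Finset.mem_Icc.1 hy).1 h.le
    have : (∑ i ∈ Finset.Ico e y, f i) ≡ (∑ i ∈ Finset.Ico e x, f i) [MOD 2^t] := hfxy.symm
    rw [← hsum] at this
    have h0 : (∑ i ∈ Finset.Ico y x, f i) ≡ 0 [MOD 2^t] := by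
      have h1 : (∑ i ∈ Finset.Ico e y, f i) + (∑ i ∈ Finset.Ico y x, f i)
          ≡ (∑ i ∈ Finset.Ico e y, f i) + 0 [MOD 2^t] := by simpa using this.symm
      exact Nat.ModEq.add_left_cancel' _ h1
    exact (Nat.modEq_zero_iff_dvd).1 h0


noncomputable section Blocks

variable (f : ℕ → ℕ)

/-- pick a block start/end past `e` whose `f`-sum is divisible by `2^t`. -/
def pick (e t : ℕ) : ℕ × ℕ := Classical.choose (exists_block f e t)

lemma pick_spec (e t : ℕ) : e ≤ (pick f e t).1 ∧ (pick f e t).1 < (pick f e t).2 ∧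
    2^t ∣ ∑ i ∈ Finset.Ico (pick f e t).1 (pick f e t).2, f i :=
  Classical.choose_spec (exists_block f e t)

/-- state after `j` blocks: (next free index, sum of all block sums so far). -/
def st : ℕ → ℕ × ℕ
  | 0 => (0, 0)
  | j+1 => ((pick f (st j).1 (st j).2).2,
      (st j).2 + ∑ i ∈ Finset.Ico (pick f (st j).1 (st j).2).1 (pick f (st j).1 (st j).2).2, f i)

/-- the `j`-th block. -/
def F (j : ℕ) : Finset ℕ :=
  Finset.Ico (pick f (st f j).1 (st f j).2).1 (pick f (st f j).1 (st f j).2).2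

/-- the `j`-th block sum. -/
def m (j : ℕ) : ℕ := ∑ i ∈ F f j, f i

/-- the `j`-th divisibility exponent. -/
def t (j : ℕ) : ℕ := (st f j).2

lemma t_succ (j : ℕ) : t f (j+1) = t f j + m f j := rfl

lemma dvd_m (j : ℕ) : 2^(t f j) ∣ m f j := (pick_spec f (st f j).1 (st f j).2).2.2

lemma F_nonempty (j : ℕ) : (F f j).Nonempty := by
  rw [F, Finset.nonempty_Ico]
  exact (pick_spec f (st f j).1 (st f j).2).2.1

lemma F_bounds (j : ℕ) : ∀ x ∈ F f j, (st f j).1 ≤ x ∧ x < (st f (j+1)).1 := by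
  intro x hx
  rw [F, Finset.mem_Ico] at hx
  exact ⟨le_trans (pick_spec f (st f j).1 (st f j).2).1 hx.1, hx.2⟩

lemma st_fst_mono : Monotone fun j => (st f j).1 := by
  apply monotone_nat_of_le_succ
  intro j
  exact le_trans (pick_spec f (st f j).1 (st f j).2).1
    (le_of_lt (pick_spec f (st f j).1 (st f j).2).2.1)

lemma F_lt {i j : ℕ} (hij : i < j) : ∀ x ∈ F f i, ∀ y ∈ F f j, x < y := by
  intro x hx y hy
  have h1 := (F_bounds f i x hx).2
  have h2 := (F_bounds f j y hy).1
  exact lt_of_lt_of_le h1 (le_trans (st_fst_mono f hij) h2)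

lemma F_disjoint {i j : ℕ} (hij : i ≠ j) : Disjoint (F f i) (F f j) := by
  rw [Finset.disjoint_left]
  intro x hxi hxj
  rcases hij.lt_or_gt with h | h
  · exact lt_irrefl x (F_lt f h x hxi x hxj)
  · exact lt_irrefl x (F_lt f h x hxj x hxi)

lemma t_eq_sum (j : ℕ) : t f j = ∑ i ∈ Finset.range j, m f i := by
  induction j with
  | zero => rfl
  | succ j ih => rw [t_succ, ih, Finset.sum_range_succ]

lemma t_mono : Monotone (t f) := by
  apply monotone_nat_of_le_succ
  intro j
  rw [t_succ]; omega

lemma sum_lt_pow {J : Finset ℕ} {j : ℕ} (hJ : ∀ x ∈ J, x < j) :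
    ∑ i ∈ J, m f i < 2^(t f j) := by
  have h1 : ∑ i ∈ J, m f i ≤ ∑ i ∈ Finset.range j, m f i :=
    Finset.sum_le_sum_of_subset (fun x hx => Finset.mem_range.2 (hJ x hx))
  rw [← t_eq_sum] at h1
  exact lt_of_le_of_lt h1 Nat.lt_two_pow_self

/-- Key support identity: the binary support of a sum of block sums
is the union of the supports. -/
lemma bset_sum (J : Finset ℕ) :
    bset (∑ j ∈ J, m f j) = J.biUnion (fun j => bset (m f j)) := by
  induction J using Finset.strongInduction with
  | _ J ih =>
    rcases J.eq_empty_or_nonempty with rfl | hJ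
    · simp [bset_zero]
    · set jm := J.max' hJ with hjm
      have hjmem : jm ∈ J := J.max'_mem hJ
      have hsub : J.erase jm ⊂ J := Finset.erase_ssubset hjmem
      have hlt : ∀ x ∈ J.erase jm, x < jm := by
        intro x hx
        rcases Finset.mem_erase.1 hx with ⟨hne, hxJ⟩
        exact lt_of_le_of_ne (J.le_max' x hxJ) hne
      have ha : ∑ i ∈ J.erase jm, m f i < 2^(t f jm) := sum_lt_pow f hlt
      have hsplit : ∑ j ∈ J, m f j = (∑ j ∈ J.erase jm, m f j) + m f jm :=
        (Finset.sum_erase_add J _ hjmem).symm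
      rw [hsplit, (bset_add ha (dvd_m f jm)).1, ih _ hsub]
      conv_rhs => rw [← Finset.insert_erase hjmem]
      rw [Finset.biUnion_insert]
      exact Finset.union_comm _ _

lemma m_pos (hf : ∀ i, 0 < f i) (j : ℕ) : 0 < m f j :=
  Finset.sum_pos (fun i _ => hf i) (F_nonempty f j)

lemma bset_m_disjoint {i j : ℕ} (hij : i ≠ j) :
    Disjoint (bset (m f i)) (bset (m f j)) := by
  wlog h : i < j generalizing i j
  · exact (this hij.symm (hij.lt_or_gt.resolve_left h)).symm
  rw [Finset.disjoint_left]
  intro x hxi hxj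
  have h1 : m f i < 2^(t f (i+1)) := by
    have : m f i ≤ t f (i+1) := by rw [t_succ]; omega
    exact lt_of_le_of_lt this Nat.lt_two_pow_self
  have h2 : x < t f (i+1) := lt_of_mem_bset h1 hxi
  have h3 : t f j ≤ x := le_of_mem_bset_dvd (dvd_m f j) hxj
  have h4 : t f (i+1) ≤ t f j := t_mono f h
  omega

/-- sum of block sums over `J` is the sum of `f` over the union of the blocks. -/
lemma sum_m_eq (J : Finset ℕ) :
    ∑ j ∈ J, m f j = ∑ i ∈ J.biUnion (F f), f i := by
  rw [Finset.sum_biUnion (fun i _ j _ hij => F_disjoint f hij)]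
  rfl

end Blocks

lemma FS_pos : ∀ (a : Stream' ℕ) (m : ℕ), m ∈ Hindman.FS a →
    (∀ i, 0 < a.get i) → 0 < m := by
  intro a m hm
  induction hm with
  | head' a => exact fun ha => ha 0
  | tail' a m h ih => exact fun ha => ih (fun i => by simpa [Stream'.get_tail] using ha (i+1))
  | cons' a m h ih =>
    intro ha
    have h0 : 0 < a.head := ha 0
    omega

theorem exists_infinite (c : ℕ) (hc : 0 < c) (chi : Finset ℕ → Fin c) :
    ∃ (D : ℕ → Finset ℕ) (col : Fin c),
      (∀ i, (D i).Nonempty) ∧ (∀ i j, i ≠ j → Disjoint (D i) (D j)) ∧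
      ∀ J : Finset ℕ, J.Nonempty → chi (J.biUnion D) = col := by
  haveI : Nonempty (Fin c) := ⟨⟨0, hc⟩⟩
  set ψ : ℕ → Fin c := fun m => chi (bset m) with hψ
  set a : Stream' ℕ := fun _ => 1 with hadef
  have ha : ∀ i, 0 < a.get i := fun i => one_pos
  have hcov : Hindman.FS a ⊆ ⋃₀ (Set.range fun v : Fin c => {m | ψ m = v ∧ 0 < m}) := by
    intro m hm
    exact ⟨_, ⟨ψ m, rfl⟩, rfl, FS_pos a m hm ha⟩
  obtain ⟨s, ⟨v, rfl⟩, bs, hbs⟩ :=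
    Hindman.FS_partition_regular a _ (Set.finite_range _) hcov
  set f : ℕ → ℕ := bs.get with hfdef
  have hf : ∀ i, 0 < f i := fun i => (hbs (Hindman.FS.singleton bs i)).2
  refine ⟨fun j => bset (m f j), v, fun j => bset_nonempty (m_pos f hf j),
    fun i j hij => bset_m_disjoint f hij, ?_⟩
  intro J hJ
  have h1 : J.biUnion (fun j => bset (m f j)) = bset (∑ j ∈ J, m f j) := (bset_sum f J).symm
  rw [h1]
  have h2 : ∑ j ∈ J, m f j ∈ Hindman.FS bs := by
    rw [sum_m_eq]
    apply Hindman.FS.finset_sum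
    obtain ⟨j, hj⟩ := hJ
    obtain ⟨x, hx⟩ := F_nonempty f j
    exact ⟨x, Finset.mem_biUnion.2 ⟨j, hj, hx⟩⟩
  exact (hbs h2).1

theorem exists_finitary (n c : ℕ) (hc : 0 < c) :
    ∃ k : ℕ, ∀ chi : Finset ℕ → Fin c,
      ∃ D : Fin n → Finset ℕ,
        (∀ i, (D i).Nonempty) ∧ (∀ i, D i ⊆ Finset.range k) ∧
        (∀ i j, i ≠ j → Disjoint (D i) (D j)) ∧
        ∃ col : Fin c, ∀ J : Finset (Fin n), J.Nonempty → chi (J.biUnion D) = col := by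
  by_contra hcon
  have hall : ∀ k : ℕ, ∃ chi : Finset ℕ → Fin c,
      ¬ ∃ D : Fin n → Finset ℕ,
        (∀ i, (D i).Nonempty) ∧ (∀ i, D i ⊆ Finset.range k) ∧
        (∀ i j, i ≠ j → Disjoint (D i) (D j)) ∧
        ∃ col : Fin c, ∀ J : Finset (Fin n), J.Nonempty → chi (J.biUnion D) = col := by
    intro k
    by_contra h
    push_neg at h
    exact hcon ⟨k, h⟩
  choose chis hchis using hall
  set U : Ultrafilter ℕ := Filter.hyperfilter ℕ with hU
  have hlim : ∀ S : Finset ℕ, ∃ v : Fin c, ∀ᶠ k in (U : Filter ℕ), chis k S = v := by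
    intro S
    by_contra h
    push_neg at h
    have hcpl : ∀ v : Fin c, {k | chis k S = v}ᶜ ∈ U := by
      intro v
      exact h v
    have hint : (⋂ v : Fin c, {k | chis k S = v}ᶜ) ∈ U := Filter.iInter_mem.2 hcpl
    obtain ⟨k, hk⟩ := Ultrafilter.nonempty_of_mem hint
    simp only [Set.mem_iInter, Set.mem_compl_iff, Set.mem_setOf_eq] at hk
    exact hk (chis k S) rfl
  choose chi hchi using hlim
  obtain ⟨D, col, hne, hdisj, hmono⟩ := exists_infinite c hc chi
  set K : ℕ := ((Finset.range n).sup fun j => (D j).sup id) + 1 with hK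
  have hDK : ∀ j < n, D j ⊆ Finset.range K := by
    intro j hj x hx
    have h1 : id x ≤ (D j).sup id := Finset.le_sup hx
    have h2 : (D j).sup id ≤ (Finset.range n).sup fun j => (D j).sup id :=
      Finset.le_sup (f := fun j => (D j).sup id) (Finset.mem_range.2 hj)
    simp only [id] at h1
    rw [Finset.mem_range]
    omega
  have hev1 : ∀ᶠ k in (U : Filter ℕ), K ≤ k := by
    apply Filter.mem_hyperfilter_of_finite_compl
    have : {k : ℕ | K ≤ k}ᶜ ⊆ Set.Iio K := by
      intro x hx
      simp only [Set.mem_compl_iff, Set.mem_setOf_eq, not_le] at hx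
      exact hx
    exact (Set.finite_Iio K).subset this
  have hev2 : ∀ᶠ k in (U : Filter ℕ), ∀ J : Finset (Fin n), J.Nonempty →
      chis k ((J.image Fin.val).biUnion D) = col := by
    rw [Filter.eventually_all]
    intro J
    by_cases hJ : J.Nonempty
    · have h := hchi ((J.image Fin.val).biUnion D)
      have heq : chi ((J.image Fin.val).biUnion D) = col := by
        apply hmono
        obtain ⟨j, hj⟩ := hJ
        exact ⟨j.val, Finset.mem_image.2 ⟨j, hj, rfl⟩⟩
      filter_upwards [h] with k hk
      intro _
      rw [hk, heq]
    · filter_upwards with k hcontra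
      exact absurd hcontra hJ
  obtain ⟨k, hkK, hkJ⟩ := (hev1.and hev2).exists
  apply hchis k
  refine ⟨fun i => D i.val, fun i => hne i.val, ?_, ?_, col, ?_⟩
  · intro i
    exact (hDK i.val i.isLt).trans (by
      intro x hx
      rw [Finset.mem_range] at *
      omega)
  · intro i j hij
    exact hdisj i.val j.val (fun h => hij (Fin.val_injective h))
  · intro J hJ
    have : J.biUnion (fun i => D i.val) = (J.image Fin.val).biUnion D := by
      ext x
      simp [Finset.mem_biUnion]
    rw [this]
    exact hkJ J hJ

end FolkmanAux

/-- `UProp n c k`: any `c`-coloring of the nonempty unions of `k` pairwise disjoint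
nonempty finite sets admits `n` pairwise disjoint elements of those unions whose
nonempty unions are monochromatic. -/
def UProp (n c k : ℕ) : Prop :=
  ∀ A : Fin k → Finset ℕ, (∀ i, (A i).Nonempty) →
    (∀ i j, i ≠ j → Disjoint (A i) (A j)) →
    ∀ chi : Finset ℕ → Fin c,
      ∃ d : Fin n → Finset ℕ,
        (∀ i j, i ≠ j → Disjoint (d i) (d j)) ∧
        (∀ i, ∃ I : Finset (Fin k), I.Nonempty ∧ d i = I.biUnion A) ∧
        ∃ col : Fin c, ∀ J : Finset (Fin n), J.Nonempty → chi (J.biUnion d) = col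

theorem uprop_of (n c k : ℕ)
    (hk : ∀ chi : Finset ℕ → Fin c,
      ∃ D : Fin n → Finset ℕ,
        (∀ i, (D i).Nonempty) ∧ (∀ i, D i ⊆ Finset.range k) ∧
        (∀ i j, i ≠ j → Disjoint (D i) (D j)) ∧
        ∃ col : Fin c, ∀ J : Finset (Fin n), J.Nonempty → chi (J.biUnion D) = col) :
    UProp n c k := by
  intro A hA hAdisj chi
  set chi' : Finset ℕ → Fin c :=
    fun S => chi ((Finset.univ.filter fun x : Fin k => ↑x ∈ S).biUnion A) with hchi'
  obtain ⟨D, hne, hsub, hdisj, col, hmono⟩ := hk chi'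
  set I : Fin n → Finset (Fin k) :=
    fun i => Finset.univ.filter fun x => ↑x ∈ D i with hI
  refine ⟨fun i => (I i).biUnion A, ?_, ?_, col, ?_⟩
  · intro i j hij
    rw [Finset.disjoint_biUnion_left]
    intro x hx
    rw [Finset.disjoint_biUnion_right]
    intro y hy
    apply hAdisj
    intro hxy
    subst hxy
    have hx' := (Finset.mem_filter.1 hx).2
    have hy' := (Finset.mem_filter.1 hy).2
    exact (Finset.disjoint_left.1 (hdisj i j hij)) hx' hy'
  · intro i
    refine ⟨I i, ?_, rfl⟩
    obtain ⟨a, ha⟩ := hne i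
    have hak : a < k := Finset.mem_range.1 (hsub i ha)
    exact ⟨⟨a, hak⟩, Finset.mem_filter.2 ⟨Finset.mem_univ _, ha⟩⟩
  · intro J hJ
    have h1 : J.biUnion (fun i => (I i).biUnion A) = (J.biUnion I).biUnion A :=
      (Finset.biUnion_biUnion J I A).symm
    have h2 : (Finset.univ.filter fun x : Fin k => ↑x ∈ J.biUnion D) = J.biUnion I := by
      ext x
      simp [hI, Finset.mem_biUnion]
    calc chi (J.biUnion fun i => (I i).biUnion A) = chi' (J.biUnion D) := by
          rw [h1, hchi', ← h2]
      _ = col := hmono J hJ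

theorem stmt_5 (n c : ℕ) (hn : 0 < n) (hc : 0 < c) :
    ∃ k, IsLeast {k | UProp n c k} k := by
  have hne : {k | UProp n c k}.Nonempty := by
    obtain ⟨k, hk⟩ := FolkmanAux.exists_finitary n c hc
    exact ⟨k, uprop_of n c k hk⟩
  exact ⟨sInf {k | UProp n c k}, Nat.sInf_mem hne, fun b hb => Nat.sInf_le hb⟩
end

section
/- For all positive integers n and c, there exists a least integer k with the following property: whenever A₀ < A₁ < ... < A_{k-1} are nonempty finite subsets of ℕ (each Aᵢ entirely below A_{i+1}) and NU{A₀,...,A_{k-1}} is c-colored, there exist nonempty finite sets d₀ < d₁ < ... < d_{n-1}, each in NU{A₀,...,A_{k-1}}, such that NU{d₀,...,d_{n-1}} is monochromatic. (This least k is denoted Hind(n,c).) -/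
open Finset

/-- `A < B` for finite sets: every element of `A` is less than every element of `B`. -/
def FinsetLT (A B : Finset ℕ) : Prop := ∀ a ∈ A, ∀ b ∈ B, a < b

def HindProp (n c k : ℕ) : Prop :=
  ∀ A : Fin k → Finset ℕ, (∀ i, (A i).Nonempty) →
    (∀ i j : Fin k, i < j → FinsetLT (A i) (A j)) →
    ∀ chi : Finset ℕ → Fin c,
      ∃ d : Fin n → Finset ℕ,
        (∀ i, (d i).Nonempty) ∧
        (∀ i j : Fin n, i < j → FinsetLT (d i) (d j)) ∧
        (∀ i, ∃ I : Finset (Fin k), I.Nonempty ∧ d i = I.biUnion A) ∧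
        ∃ col : Fin c, ∀ J : Finset (Fin n), J.Nonempty → chi (J.biUnion d) = col

namespace HindmanAux

open Hindman Filter

lemma toFinset_sum {ι : Type*} (J : Finset ι) (g : ι → Multiset ℕ) :
    (∑ i ∈ J, g i).toFinset = J.biUnion fun i => (g i).toFinset := by
  classical
  induction J using Finset.induction with
  | empty => simp
  | insert _ _ h ih => simp [Finset.sum_insert h, Multiset.toFinset_add, ih, Finset.biUnion_insert]

lemma fs_nodup {a : Stream' (Multiset ℕ)} {m : Multiset ℕ} (h : m ∈ Hindman.FS a) :
    ∀ f : ℕ → ℕ, Function.Injective f → (∀ i, a.get i = {f i}) →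
      m ≠ 0 ∧ m.Nodup ∧ ∀ x ∈ m, ∃ j, f j = x := by
  induction h with
  | head' a =>
    intro f hf ha
    have h0 : a.head = ({f 0} : Multiset ℕ) := ha 0
    rw [h0]
    refine ⟨by simp, by simp, ?_⟩
    intro x hx
    rw [Multiset.mem_singleton] at hx
    exact ⟨0, hx.symm⟩
  | tail' a m h ih =>
    intro f hf ha
    have hf' : Function.Injective fun i => f (i + 1) := fun i j hij => by
      have := hf hij; omega
    obtain ⟨h1, h2, h3⟩ := ih (fun i => f (i + 1)) hf' (fun i => ha (i + 1))
    exact ⟨h1, h2, fun x hx => let ⟨j, hj⟩ := h3 x hx; ⟨j + 1, hj⟩⟩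
  | cons' a m h ih =>
    intro f hf ha
    have hf' : Function.Injective fun i => f (i + 1) := fun i j hij => by
      have := hf hij; omega
    obtain ⟨h1, h2, h3⟩ := ih (fun i => f (i + 1)) hf' (fun i => ha (i + 1))
    have hhead : a.head = ({f 0} : Multiset ℕ) := ha 0
    rw [hhead, Multiset.singleton_add]
    have hnotmem : f 0 ∉ m := by
      intro hm
      obtain ⟨j, hj⟩ := h3 _ hm
      have := hf hj
      omega
    refine ⟨by simp, Multiset.nodup_cons.mpr ⟨hnotmem, h2⟩, ?_⟩
    intro x hx
    rcases Multiset.mem_cons.mp hx with h | h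
    · exact ⟨0, h.symm⟩
    · exact let ⟨j, hj⟩ := h3 x h; ⟨j + 1, hj⟩

lemma exists_ordered (n c : ℕ) (chi : Finset ℕ → Fin c) :
    ∃ d : Fin n → Finset ℕ, (∀ i, (d i).Nonempty) ∧
      (∀ i j : Fin n, i < j → FinsetLT (d i) (d j)) ∧
      ∃ col : Fin c, ∀ J : Finset (Fin n), J.Nonempty → chi (J.biUnion d) = col := by
  classical
  set a : Stream' (Multiset ℕ) := fun i => ({i} : Multiset ℕ) with ha
  obtain ⟨C, hC, b, hb⟩ := Hindman.FS_partition_regular a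
      (Set.range fun v : Fin c => {m | m ∈ Hindman.FS a ∧ chi m.toFinset = v})
      (Set.finite_range _)
      (fun m hm => Set.mem_sUnion.mpr ⟨_, ⟨chi m.toFinset, rfl⟩, hm, rfl⟩)
  obtain ⟨v, rfl⟩ := hC
  have key : ∀ m ∈ Hindman.FS b, m ≠ 0 ∧ m.Nodup ∧ chi m.toFinset = v := by
    intro m hm
    have h2 := hb hm
    have h3 := fs_nodup h2.1 id (fun x y h => h) (fun i => rfl)
    exact ⟨h3.1, h3.2.1, h2.2⟩
  set t : ℕ → Finset ℕ := fun i => (b.get i).toFinset with ht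
  have hmem : ∀ i, b.get i ∈ Hindman.FS b := fun i => Hindman.FS.singleton b i
  have htne : ∀ i, (t i).Nonempty := by
    intro i
    rcases Multiset.exists_mem_of_ne_zero (key _ (hmem i)).1 with ⟨x, hx⟩
    exact ⟨x, Multiset.mem_toFinset.mpr hx⟩
  have hdisj : ∀ i j, i ≠ j → ∀ x, x ∈ t i → x ∉ t j := by
    have H : ∀ i j, i < j → ∀ x, x ∈ t i → x ∉ t j := by
      intro i j hij x hxi hxj
      have hsum : b.get i + b.get j ∈ Hindman.FS b := Hindman.FS.add_two b i j hij
      exact Multiset.disjoint_left.mp (Multiset.disjoint_of_nodup_add (key _ hsum).2.1)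
        (Multiset.mem_toFinset.mp hxi) (Multiset.mem_toFinset.mp hxj)
    intro i j hij x hxi hxj
    rcases lt_or_gt_of_ne hij with h | h
    · exact H i j h x hxi hxj
    · exact H j i h x hxj hxi
  have step : ∀ m M : ℕ, ∃ i, m < i ∧ ∀ x ∈ t i, M < x := by
    intro m M
    by_contra hcon
    push_neg at hcon
    choose x hx1 hx2 using fun j => hcon (m + 1 + j) (by omega)
    have : ∀ j, x j < M + 1 := fun j => by have := hx2 j; omega
    obtain ⟨j1, j2, hne, heq⟩ :=
      Finite.exists_ne_map_eq_of_infinite (fun j : ℕ => (⟨x j, this j⟩ : Fin (M + 1)))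
    have hx : x j1 = x j2 := by simpa using congrArg Fin.val heq
    exact hdisj (m + 1 + j1) (m + 1 + j2) (by omega) (x j1) (hx1 j1) (hx ▸ hx1 j2)
  choose F hF1 hF2 using step
  let e : ℕ → ℕ := fun k => Nat.rec 0 (fun _ p => F p ((t p).max' (htne p))) k
  have he : ∀ k, e (k + 1) = F (e k) ((t (e k)).max' (htne _)) := fun k => rfl
  have hlt : ∀ k, ∀ x ∈ t (e k), ∀ y ∈ t (e (k + 1)), x < y := by
    intro k x hx y hy
    rw [he k] at hy
    calc x ≤ (t (e k)).max' (htne _) := Finset.le_max' _ _ hx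
      _ < y := hF2 _ _ y hy
  have hblocks : ∀ j k : ℕ, j < k → ∀ x ∈ t (e j), ∀ y ∈ t (e k), x < y := by
    intro j k hjk
    induction k with
    | zero => omega
    | succ k ih =>
      rcases Nat.lt_succ_iff_lt_or_eq.mp hjk with h | h
      · intro x hx y hy
        obtain ⟨z, hz⟩ := htne (e k)
        exact (ih h x hx z hz).trans (hlt k z hz y hy)
      · subst h; exact hlt j
  have emono : StrictMono e := strictMono_nat_of_lt_succ (fun k => by rw [he k]; exact hF1 _ _)
  refine ⟨fun i => t (e i), fun i => htne _, ?_, v, ?_⟩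
  · intro i j hij x hx y hy
    exact hblocks i j hij x hx y hy
  · intro J hJ
    have hsum : (∑ i ∈ J.image (fun i : Fin n => e i), b.get i) ∈ Hindman.FS b :=
      Hindman.FS.finset_sum b _ (hJ.image _)
    have heq : (∑ i ∈ J.image (fun i : Fin n => e i), b.get i) = ∑ i ∈ J, b.get (e i) :=
      Finset.sum_image (fun p _ q _ h => Fin.ext (by exact_mod_cast emono.injective h))
    have hts : (∑ i ∈ J, b.get (e i)).toFinset = J.biUnion (fun i => t (e ↑i)) :=
      toFinset_sum J _
    have hv := (key _ hsum).2.2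
    rw [heq, hts] at hv
    exact hv

lemma compactness (n c : ℕ) :
    ∃ k : ℕ, ∀ chi : Finset ℕ → Fin c,
      ∃ d : Fin n → Finset ℕ, (∀ i, (d i).Nonempty) ∧ (∀ i, ∀ x ∈ d i, x < k) ∧
        (∀ i j : Fin n, i < j → FinsetLT (d i) (d j)) ∧
        ∃ col : Fin c, ∀ J : Finset (Fin n), J.Nonempty → chi (J.biUnion d) = col := by
  classical
  by_contra h
  have h' : ∀ k : ℕ, ∃ chi : Finset ℕ → Fin c,
      ¬ ∃ d : Fin n → Finset ℕ, (∀ i, (d i).Nonempty) ∧ (∀ i, ∀ x ∈ d i, x < k) ∧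
        (∀ i j : Fin n, i < j → FinsetLT (d i) (d j)) ∧
        ∃ col : Fin c, ∀ J : Finset (Fin n), J.Nonempty → chi (J.biUnion d) = col := by
    intro k
    by_contra hk
    exact h ⟨k, not_exists_not.mp hk⟩
  choose chi hchi using h'
  obtain ⟨U, hU⟩ := Ultrafilter.exists_le (atTop : Filter ℕ)
  have hval : ∀ S : Finset ℕ, ∃ v : Fin c, ∀ᶠ k in (U : Filter ℕ), chi k S = v := by
    intro S
    obtain ⟨v, hv⟩ := (U.map fun k => chi k S).eq_pure_of_finite
    refine ⟨v, ?_⟩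
    have : {v} ∈ (U.map fun k => chi k S) := by rw [hv]; exact Filter.singleton_mem_pure
    exact Filter.mem_map.mp this
  choose Chi hChi using hval
  obtain ⟨d, hne, hord, col, hmono⟩ := exists_ordered n c Chi
  set m : ℕ := ((univ : Finset (Fin n)).sup fun i => (d i).sup id) + 1 with hm
  have hbound : ∀ i, ∀ x ∈ d i, x < m := by
    intro i x hx
    have : x ≤ (univ : Finset (Fin n)).sup fun i => (d i).sup id :=
      le_trans (Finset.le_sup (f := id) hx)
        (Finset.le_sup (f := fun i => (d i).sup id) (mem_univ i))
    omega
  have hev : ∀ᶠ k in (U : Filter ℕ),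
      ∀ J : Finset (Fin n), J.Nonempty → chi k (J.biUnion d) = Chi (J.biUnion d) :=
    Filter.eventually_all.mpr fun J => (hChi (J.biUnion d)).mono fun k hk _ => hk
  have hev2 : ∀ᶠ k in (U : Filter ℕ), m ≤ k := hU (Filter.eventually_ge_atTop m)
  obtain ⟨k, hk1, hk2⟩ := (hev.and hev2).exists
  exact hchi k ⟨d, hne, fun i x hx => lt_of_lt_of_le (hbound i x hx) hk2, hord, col,
    fun J hJ => (hk1 J hJ).trans (hmono J hJ)⟩

lemma hindProp_of_key (n c k : ℕ)
    (hk : ∀ chi : Finset ℕ → Fin c,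
      ∃ d : Fin n → Finset ℕ, (∀ i, (d i).Nonempty) ∧ (∀ i, ∀ x ∈ d i, x < k) ∧
        (∀ i j : Fin n, i < j → FinsetLT (d i) (d j)) ∧
        ∃ col : Fin c, ∀ J : Finset (Fin n), J.Nonempty → chi (J.biUnion d) = col) :
    HindProp n c k := by
  classical
  intro A hA hAlt chi
  set g : ℕ → Finset ℕ := fun j => if h : j < k then A ⟨j, h⟩ else ∅ with hg
  obtain ⟨d', h1, h2, h3, col, h4⟩ := hk (fun S => chi (S.biUnion g))
  refine ⟨fun i => (d' i).biUnion g, ?_, ?_, ?_, col, ?_⟩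
  · intro i
    obtain ⟨j, hj⟩ := h1 i
    have hjk : j < k := h2 i j hj
    obtain ⟨x, hx⟩ := hA ⟨j, hjk⟩
    exact ⟨x, Finset.mem_biUnion.mpr ⟨j, hj, by simp [hg, hjk, hx]⟩⟩
  · intro i j hij x hx y hy
    obtain ⟨p, hp, hxp⟩ := Finset.mem_biUnion.mp hx
    obtain ⟨q, hq, hyq⟩ := Finset.mem_biUnion.mp hy
    have hpk : p < k := h2 i p hp
    have hqk : q < k := h2 j q hq
    have hpq : p < q := h3 i j hij p hp q hq
    have := hAlt ⟨p, hpk⟩ ⟨q, hqk⟩ hpq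
    simp only [hg, dif_pos hpk] at hxp
    simp only [hg, dif_pos hqk] at hyq
    exact this x hxp y hyq
  · intro i
    refine ⟨(d' i).attachFin (h2 i), ?_, ?_⟩
    · obtain ⟨j, hj⟩ := h1 i
      exact ⟨⟨j, h2 i j hj⟩, (Finset.mem_attachFin _).mpr hj⟩
    · ext x
      simp only [Finset.mem_biUnion]
      constructor
      · rintro ⟨p, hp, hxp⟩
        have hpk : p < k := h2 i p hp
        simp only [hg, dif_pos hpk] at hxp
        exact ⟨⟨p, hpk⟩, (Finset.mem_attachFin _).mpr hp, hxp⟩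
      · rintro ⟨p, hp, hxp⟩
        refine ⟨p.val, (Finset.mem_attachFin _).mp hp, ?_⟩
        simp only [hg, dif_pos p.isLt]
        exact hxp
  · intro J hJ
    have : (J.biUnion fun i => (d' i).biUnion g) = (J.biUnion d').biUnion g :=
      (Finset.biUnion_biUnion J d' g).symm
    rw [this]
    exact h4 J hJ

end HindmanAux

theorem stmt_6 (n c : ℕ) (hn : 0 < n) (hc : 0 < c) :
    ∃ k, IsLeast {k | HindProp n c k} k := by
  obtain ⟨k, hk⟩ := HindmanAux.compactness n c
  have hne : {k | HindProp n c k}.Nonempty := ⟨k, HindmanAux.hindProp_of_key n c k hk⟩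
  exact ⟨sInf {k | HindProp n c k}, Nat.sInf_mem hne, fun m hm => Nat.sInf_le hm⟩
end

section
/- For all positive integers m, p, c, there exists a least integer k such that for every c-coloring of {1,...,k} there is a set H = {a₀ < a₁ < ... < a_{l-1}} ⊆ {1,...,k} such that ∑H (the set of all sums of nonempty subsets of H) is monochromatic, m ≤ a₀, p ≤ l, and a_{p-1} ≤ l. (This least k is denoted Sp(m,p,c).) -/
open Finset

/-- `SpProp m p c k`: every `c`-coloring of `{1,…,k}` admits
`H = {a₀ < … < a_{l-1}} ⊆ {1,…,k}` with all sums of nonempty subsets of `H`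
monochromatic, `m ≤ a₀`, `p ≤ l` and `a_{p-1} ≤ l`. -/
def SpProp (m p c k : ℕ) : Prop :=
  ∀ chi : ℕ → Fin c,
    ∃ (l : ℕ) (a : Fin l → ℕ) (hpl : 0 < p ∧ p ≤ l),
      StrictMono a ∧
      (∀ i, 1 ≤ a i ∧ a i ≤ k) ∧
      m ≤ a ⟨0, lt_of_lt_of_le hpl.1 hpl.2⟩ ∧
      a ⟨p - 1, lt_of_lt_of_le (Nat.pred_lt hpl.1.ne') hpl.2⟩ ≤ l ∧
      ∃ col : Fin c, ∀ I : Finset (Fin l), I.Nonempty → chi (∑ i ∈ I, a i) = col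

/-- Elements of an FS-set of a positive stream are positive. -/
lemma my_FS_pos : ∀ {a : Stream' ℕ} {x : ℕ}, x ∈ Hindman.FS a →
    (∀ i, 0 < a.get i) → 0 < x := by
  intro a x hx
  induction hx with
  | head' a => intro ha; exact ha 0
  | tail' a m h ih => exact fun ha => ih fun i => ha (i + 1)
  | cons' a m h ih =>
      intro ha
      exact Nat.lt_of_lt_of_le (ha 0) (Nat.le_add_right _ _)

/-- Hindman: there is a stream of positive integers with monochromatic finite sums. -/
lemma my_hindman (c : ℕ) (chi : ℕ → Fin c) :
    ∃ col : Fin c, ∃ b : Stream' ℕ, (∀ i, 1 ≤ b.get i) ∧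
      ∀ I : Finset ℕ, I.Nonempty → chi (∑ i ∈ I, b.get i) = col := by
  set a₀ : Stream' ℕ := fun n => n + 1 with ha₀
  have hpos : ∀ i, 0 < a₀.get i := fun i => Nat.succ_pos i
  set s : Set (Set ℕ) := Set.range (fun v : Fin c => {n : ℕ | 0 < n ∧ chi n = v}) with hs
  have sfin : s.Finite := Set.finite_range _
  have scov : Hindman.FS a₀ ⊆ ⋃₀ s := by
    intro x hx
    exact ⟨{n : ℕ | 0 < n ∧ chi n = chi x}, ⟨chi x, rfl⟩, my_FS_pos hx hpos, rfl⟩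
  obtain ⟨cs, hcs, b, hFSb⟩ := Hindman.FS_partition_regular a₀ s sfin scov
  obtain ⟨col, rfl⟩ := hcs
  refine ⟨col, b, fun i => (hFSb (Hindman.FS.singleton b i)).1, fun I hI => ?_⟩
  exact (hFSb (Hindman.FS.finset_sum b I hI)).2

section Blocks

variable (m : ℕ) (b : ℕ → ℕ)

/-- Block boundaries. -/
def tfun : ℕ → ℕ
  | 0 => 0
  | j + 1 => tfun j + (m + (∑ i ∈ Finset.range (tfun j), b i) + 1)

/-- Block sums. -/
def cfun (j : ℕ) : ℕ := ∑ i ∈ Finset.Ico (tfun m b j) (tfun m b (j + 1)), b i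

lemma tfun_lt (j : ℕ) : tfun m b j < tfun m b (j + 1) := by
  show tfun m b j < tfun m b j + _
  omega

lemma tfun_mono : StrictMono (tfun m b) :=
  strictMono_nat_of_lt_succ (tfun_lt m b)

lemma cfun_ge (hb : ∀ i, 1 ≤ b i) (j : ℕ) :
    m + (∑ i ∈ Finset.range (tfun m b j), b i) + 1 ≤ cfun m b j := by
  have h1 : (Finset.Ico (tfun m b j) (tfun m b (j + 1))).card • 1 ≤
      ∑ i ∈ Finset.Ico (tfun m b j) (tfun m b (j + 1)), b i :=
    Finset.card_nsmul_le_sum _ _ _ (fun i _ => hb i)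
  have h2 : (Finset.Ico (tfun m b j) (tfun m b (j + 1))).card =
      m + (∑ i ∈ Finset.range (tfun m b j), b i) + 1 := by
    rw [Nat.card_Ico]
    show tfun m b j + _ - tfun m b j = _
    omega
  rw [h2, smul_eq_mul, mul_one] at h1
  exact h1

lemma cfun_le (j : ℕ) :
    cfun m b j ≤ ∑ i ∈ Finset.range (tfun m b (j + 1)), b i := by
  refine Finset.sum_le_sum_of_subset ?_
  rw [Finset.range_eq_Ico]
  exact Finset.Ico_subset_Ico (Nat.zero_le _) le_rfl

lemma cfun_mono (hb : ∀ i, 1 ≤ b i) : StrictMono (cfun m b) := by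
  refine strictMono_nat_of_lt_succ fun j => ?_
  have h1 := cfun_le m b j
  have h2 := cfun_ge m b hb (j + 1)
  omega

lemma cfun_ge_add (hb : ∀ i, 1 ≤ b i) (j : ℕ) : m + 1 + j ≤ cfun m b j := by
  induction j with
  | zero => have := cfun_ge m b hb 0; omega
  | succ j ih => have := cfun_mono m b hb (show j < j + 1 by omega); omega

lemma sum_cfun (I : Finset ℕ) (hI : I.Nonempty) :
    ∃ J : Finset ℕ, J.Nonempty ∧ ∑ j ∈ I, cfun m b j = ∑ i ∈ J, b i := by
  refine ⟨I.biUnion (fun j => Finset.Ico (tfun m b j) (tfun m b (j + 1))), ?_, ?_⟩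
  · obtain ⟨j, hj⟩ := hI
    exact ⟨tfun m b j, Finset.mem_biUnion.mpr
      ⟨j, hj, Finset.mem_Ico.mpr ⟨le_rfl, tfun_lt m b j⟩⟩⟩
  · have hdisj : (I : Set ℕ).PairwiseDisjoint
        (fun j => Finset.Ico (tfun m b j) (tfun m b (j + 1))) := by
      intro x _ y _ hxy
      have key : ∀ u v : ℕ, u < v →
          Disjoint (Finset.Ico (tfun m b u) (tfun m b (u + 1)))
            (Finset.Ico (tfun m b v) (tfun m b (v + 1))) := by
        intro u v huv
        rw [Finset.disjoint_left]
        intro z hz1 hz2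
        rw [Finset.mem_Ico] at hz1 hz2
        have := (tfun_mono m b).monotone (show u + 1 ≤ v from huv)
        omega
      rcases lt_or_gt_of_ne hxy with h | h
      · exact key x y h
      · exact (key y x h).symm
    simp only [cfun]
    exact (Finset.sum_biUnion hdisj).symm

end Blocks

lemma exists_witness (m p : ℕ) (hm : 0 < m) (hp : 0 < p) {c : ℕ} (chi : ℕ → Fin c) :
    ∃ (K l : ℕ) (a : Fin l → ℕ) (hpl : 0 < p ∧ p ≤ l),
      StrictMono a ∧ (∀ i, 1 ≤ a i ∧ a i ≤ K) ∧
      m ≤ a ⟨0, lt_of_lt_of_le hpl.1 hpl.2⟩ ∧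
      a ⟨p - 1, lt_of_lt_of_le (Nat.pred_lt hpl.1.ne') hpl.2⟩ ≤ l ∧
      ∃ col : Fin c, ∀ I : Finset (Fin l), I.Nonempty → chi (∑ i ∈ I, a i) = col := by
  obtain ⟨col, bs, hb, hsum⟩ := my_hindman c chi
  set b : ℕ → ℕ := fun i => bs.get i with hbdef
  set l : ℕ := cfun m b (p - 1) with hl
  have hpl : 0 < p ∧ p ≤ l := by
    refine ⟨hp, ?_⟩
    have := cfun_ge_add m b hb (p - 1)
    omega
  set a : Fin l → ℕ := fun i => cfun m b i with ha
  have hmono : StrictMono a := fun i j hij => cfun_mono m b hb hij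
  refine ⟨cfun m b (l - 1), l, a, hpl, hmono, ?_, ?_, ?_, col, ?_⟩
  · intro i
    constructor
    · have := cfun_ge_add m b hb (i : ℕ); simp only [ha]; omega
    · exact (cfun_mono m b hb).monotone (by omega : (i : ℕ) ≤ l - 1)
  · have := cfun_ge_add m b hb 0
    simp only [ha]
    omega
  · exact le_rfl
  · intro I hI
    have himg : ∑ i ∈ I, a i = ∑ j ∈ I.image (fun i : Fin l => (i : ℕ)), cfun m b j := by
      rw [Finset.sum_image (by intro x _ y _ h; exact Fin.val_injective h)]
    obtain ⟨J, hJne, hJ⟩ := sum_cfun m b (I.image (fun i : Fin l => (i : ℕ)))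
      (hI.image _)
    rw [himg, hJ]
    exact hsum J hJne

theorem stmt_7 (m p c : ℕ) (hm : 0 < m) (hp : 0 < p) (hc : 0 < c) :
    ∃ k, IsLeast {k | SpProp m p c k} k := by
  classical
  have hex : ∃ k, SpProp m p c k := by
    by_contra hno
    push_neg at hno
    have hF : ∀ k, ∃ chi : ℕ → Fin c,
        ¬ ∃ (l : ℕ) (a : Fin l → ℕ) (hpl : 0 < p ∧ p ≤ l),
          StrictMono a ∧
          (∀ i, 1 ≤ a i ∧ a i ≤ k) ∧
          m ≤ a ⟨0, lt_of_lt_of_le hpl.1 hpl.2⟩ ∧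
          a ⟨p - 1, lt_of_lt_of_le (Nat.pred_lt hpl.1.ne') hpl.2⟩ ≤ l ∧
          ∃ col : Fin c, ∀ I : Finset (Fin l), I.Nonempty → chi (∑ i ∈ I, a i) = col := by
      intro k
      exact not_forall.mp (hno k)
    choose F hFspec using hF
    set U : Ultrafilter ℕ := Ultrafilter.of Filter.atTop with hU
    have hUtop : ∀ s ∈ (Filter.atTop : Filter ℕ), s ∈ U :=
      fun s hs => Filter.le_def.mp (Ultrafilter.of_le Filter.atTop) s hs
    have hchi : ∀ n, ∃ v : Fin c, {k | F k n = v} ∈ U := by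
      intro n
      by_contra h
      push_neg at h
      have hmem : (⋂ v : Fin c, {k | F k n = v}ᶜ) ∈ U :=
        Filter.iInter_mem.mpr fun v => (Ultrafilter.compl_mem_iff_notMem).mpr (h v)
      obtain ⟨k, hk⟩ := Ultrafilter.nonempty_of_mem hmem
      exact (Set.mem_iInter.mp hk (F k n)) rfl
    choose chi hchiU using hchi
    obtain ⟨K, l, a, hpl, hmono, hbd, hm0, hp1, col, hcol⟩ :=
      exists_witness m p hm hp chi
    set S : ℕ := ∑ i : Fin l, a i with hS
    have hA : ({k | K ≤ k} ∩ ⋂ n ∈ Set.Iic S, {k | F k n = chi n}) ∈ U := by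
      refine Filter.inter_mem (hUtop _ (Filter.mem_atTop K)) ?_
      exact (Filter.biInter_mem (Set.finite_Iic S)).mpr fun n _ => hchiU n
    obtain ⟨k, hk⟩ := Ultrafilter.nonempty_of_mem hA
    obtain ⟨hk1, hk2⟩ := hk
    refine hFspec k ⟨l, a, hpl, hmono,
      fun i => ⟨(hbd i).1, le_trans (hbd i).2 hk1⟩, hm0, hp1, col, ?_⟩
    intro I hI
    have hle : ∑ i ∈ I, a i ≤ S :=
      Finset.sum_le_sum_of_subset (Finset.subset_univ I)
    have hag : F k (∑ i ∈ I, a i) = chi (∑ i ∈ I, a i) :=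
      Set.mem_iInter₂.mp hk2 (∑ i ∈ I, a i) hle
    rw [hag, hcol I hI]
  exact ⟨Nat.find hex, Nat.find_spec hex, fun b hb => Nat.find_min' hex hb⟩
end

section
/- For all positive integers p and c, every c-coloring of the positive integers admits a set H = {a₀ < ... < a_{l-1}} of positive integers with ∑H monochromatic, p ≤ l, and a_{p-1} ≤ l. (Infinitary form implying the existence of Spencer numbers with m = 1.) -/
open Finset

/-- Block endpoints: block `k` is `Ico (g b k).1 (g b k).2`. -/
def hindmanG (b : ℕ → ℕ) : ℕ → ℕ × ℕ
  | 0 => (0, 1)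
  | k + 1 =>
    ((hindmanG b k).2,
      (hindmanG b k).2 + (∑ i ∈ Finset.Ico (hindmanG b k).1 (hindmanG b k).2, b i) + 1)

/-- Sum over block `k`. -/
def hindmanA (b : ℕ → ℕ) (k : ℕ) : ℕ :=
  ∑ i ∈ Finset.Ico (hindmanG b k).1 (hindmanG b k).2, b i

lemma hindmanG_lt (b : ℕ → ℕ) (k : ℕ) : (hindmanG b k).1 < (hindmanG b k).2 := by
  cases k with
  | zero => simp [hindmanG]
  | succ k => simp [hindmanG]

lemma hindmanG_snd_mono (b : ℕ → ℕ) : StrictMono fun k => (hindmanG b k).2 := by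
  apply strictMono_nat_of_lt_succ
  intro k
  simp [hindmanG]

lemma hindmanG_fst_succ (b : ℕ → ℕ) (k : ℕ) :
    (hindmanG b (k + 1)).1 = (hindmanG b k).2 := rfl

lemma hindman_blocks_disjoint (b : ℕ → ℕ) {i j : ℕ} (hij : i < j) :
    Disjoint (Finset.Ico (hindmanG b i).1 (hindmanG b i).2)
      (Finset.Ico (hindmanG b j).1 (hindmanG b j).2) := by
  have h1 : (hindmanG b i).2 ≤ (hindmanG b j).1 := by
    obtain ⟨d, rfl⟩ := Nat.exists_eq_add_of_lt hij
    rw [Nat.add_succ, hindmanG_fst_succ]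
    exact (hindmanG_snd_mono b).monotone (Nat.le_add_right _ _)
  rw [Finset.disjoint_left]
  intro x hx hx'
  rw [Finset.mem_Ico] at hx hx'
  omega

lemma hindmanA_pos (b : ℕ → ℕ) (hb : ∀ i, 0 < b i) (k : ℕ) : 0 < hindmanA b k := by
  have h := hindmanG_lt b k
  calc 0 < b (hindmanG b k).1 := hb _
    _ ≤ _ := Finset.single_le_sum (f := b) (fun i _ => Nat.zero_le _)
        (Finset.mem_Ico.2 ⟨le_rfl, h⟩)

lemma hindmanA_strictMono (b : ℕ → ℕ) (hb : ∀ i, 0 < b i) : StrictMono (hindmanA b) := by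
  apply strictMono_nat_of_lt_succ
  intro k
  have hcard : (Finset.Ico (hindmanG b (k + 1)).1 (hindmanG b (k + 1)).2).card
      = hindmanA b k + 1 := by
    rw [Nat.card_Ico]
    show (hindmanG b k).2 + _ + 1 - (hindmanG b k).2 = _
    unfold hindmanA
    omega
  have : (Finset.Ico (hindmanG b (k + 1)).1 (hindmanG b (k + 1)).2).card
      ≤ hindmanA b (k + 1) := by
    unfold hindmanA
    calc (Finset.Ico (hindmanG b (k + 1)).1 (hindmanG b (k + 1)).2).card
        = ∑ _i ∈ Finset.Ico (hindmanG b (k + 1)).1 (hindmanG b (k + 1)).2, 1 := by simp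
      _ ≤ _ := Finset.sum_le_sum fun i _ => hb i
  omega

lemma FS_pos (a : Stream' ℕ) (ha : ∀ i, 0 < a.get i) : ∀ m ∈ Hindman.FS a, 0 < m := by
  intro m hm
  induction hm with
  | head' a => exact ha 0
  | tail' a m h ih => exact ih fun i => ha (i + 1)
  | cons' a m h ih =>
    have := ih fun i => ha (i + 1)
    have := ha 0
    show 0 < a.get 0 + m
    omega

theorem stmt_10 (p c : ℕ) (hp : 0 < p) (hc : 0 < c) (chi : ℕ → Fin c) :
    ∃ (l : ℕ) (a : Fin l → ℕ) (hpl : p ≤ l),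
      StrictMono a ∧ (∀ i, 0 < a i) ∧
      a ⟨p - 1, lt_of_lt_of_le (Nat.pred_lt hp.ne') hpl⟩ ≤ l ∧
      ∃ col : Fin c, ∀ I : Finset (Fin l), I.Nonempty → chi (∑ i ∈ I, a i) = col := by
  -- Apply Hindman's theorem to the stream of positive integers
  set a0 : Stream' ℕ := fun n => n + 1 with ha0
  have hpos0 : ∀ i, 0 < a0.get i := fun i => Nat.succ_pos i
  set S : Set (Set ℕ) := Set.range (fun j : Fin c => {x | 0 < x ∧ chi x = j}) with hS
  have hcov : Hindman.FS a0 ⊆ ⋃₀ S := by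
    intro m hm
    exact ⟨{x | 0 < x ∧ chi x = chi m}, ⟨chi m, rfl⟩, FS_pos a0 hpos0 m hm, rfl⟩
  obtain ⟨cell, hcell, b, hFSb⟩ :=
    Hindman.FS_partition_regular a0 S (Set.finite_range _) hcov
  obtain ⟨j, rfl⟩ := hcell
  have hb : ∀ i, 0 < b.get i := fun i => (hFSb (Hindman.FS.singleton b i)).1
  have hchi : ∀ m ∈ Hindman.FS b, chi m = j := fun m hm => (hFSb hm).2
  set A : ℕ → ℕ := hindmanA b.get with hA
  refine ⟨max p (A (p - 1)), fun i => A i, le_max_left _ _, ?_, ?_, ?_, j, ?_⟩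
  · exact fun i k hik => hindmanA_strictMono b.get hb hik
  · exact fun i => hindmanA_pos b.get hb i
  · exact le_max_right _ _
  · intro I hI
    set t : Fin (max p (A (p - 1))) → Finset ℕ :=
      fun i => Finset.Ico (hindmanG b.get i).1 (hindmanG b.get i).2 with ht
    have hdisj : (↑I : Set (Fin (max p (A (p - 1))))).PairwiseDisjoint t := by
      intro x _ y _ hxy
      rcases lt_or_gt_of_ne (fun h : (x : ℕ) = y => hxy (Fin.ext h)) with h | h
      · exact hindman_blocks_disjoint b.get h
      · exact (hindman_blocks_disjoint b.get h).symm
    have hsum : ∑ i ∈ I, A i = ∑ x ∈ I.biUnion t, b.get x :=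
      (Finset.sum_biUnion hdisj).symm
    have hne : (I.biUnion t).Nonempty := by
      obtain ⟨i, hi⟩ := hI
      exact ⟨(hindmanG b.get i).1, Finset.mem_biUnion.2 ⟨i, hi,
        Finset.mem_Ico.2 ⟨le_rfl, hindmanG_lt b.get i⟩⟩⟩
    rw [hsum]
    exact hchi _ (Hindman.FS.finset_sum b _ hne)
end
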